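/- Let n be even and let F : F_{2^n} → F_{2^n} be a quadratic APN function with F(0) = 0 such that every y in the image of F with y ≠ 0 has at least 3 preimages under F. Then F(x) = 0 if and only if x = 0, and every y ≠ 0 in the image of F has precisely 3 preimages, i.e., F is 3-to-1. -/

import Mathlib

/-- A function `F : V → V` on an `𝔽₂`-vector space is almost perfect nonlinear (APN)
if for every `a ≠ 0` and every `b`, the equation `F (x + a) + F x = b` has at most
two solutions. -/
def IsAPN {V : Type*} [AddCommGroup V] (F : V → V) : Prop :=
  ∀ a : V, a ≠ 0 → ∀ b : V, Set.ncard {x : V | F (x + a) + F x = b} ≤ 2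

/-- `F` is quadratic if every discrete derivative `x ↦ F (x + a) + F x` is an
`𝔽₂`-affine map. -/
def IsQuadratic {V : Type*} [AddCommGroup V] [Module (ZMod 2) V] (F : V → V) : Prop :=
  ∀ a : V, ∃ (L : V →ₗ[ZMod 2] V) (c : V), ∀ x : V, F (x + a) + F x = L x + c

open Finset

/-- If `n` is even and `F : 𝔽_{2^n} → 𝔽_{2^n}` is a quadratic APN function with
`F 0 = 0` such that every nonzero value of `F` has at least `3` preimages, then
`F x = 0` iff `x = 0`, and every nonzero value has exactly `3` preimages,
i.e. `F` is `3`-to-`1`. -/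
theorem stmt_16 (n : ℕ) (hn : 0 < n) (hne : Even n)
    (F : GaloisField 2 n → GaloisField 2 n)
    (hF : IsAPN F) (hFq : IsQuadratic F) (hF0 : F 0 = 0)
    (h3 : ∀ y ∈ Set.range F, y ≠ 0 → 3 ≤ Set.ncard {x : GaloisField 2 n | F x = y}) :
    (∀ x : GaloisField 2 n, F x = 0 ↔ x = 0) ∧
      (∀ y ∈ Set.range F, y ≠ 0 → Set.ncard {x : GaloisField 2 n | F x = y} = 3) := by
  haveI : Fact (Nat.Prime 2) := ⟨Nat.prime_two⟩
  haveI : Fintype (GaloisField 2 n) := Fintype.ofFinite _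
  classical
  set q : ℕ := Fintype.card (GaloisField 2 n) with hqdef
  have hq : q = 2 ^ n := by
    rw [hqdef, ← Nat.card_eq_fintype_card, GaloisField.card 2 n hn.ne']
  have hchar : ∀ a b : GaloisField 2 n, a + b = 0 ↔ a = b := fun a b => by
    rw [← CharTwo.sub_eq_add, sub_eq_zero]
  set m : GaloisField 2 n → ℕ := fun y => (univ.filter fun x => F x = y).card with hm
  have hncard : ∀ y : GaloisField 2 n, Set.ncard {x : GaloisField 2 n | F x = y} = m y := by
    intro y
    rw [Set.ncard_eq_toFinset_card']
    simp [hm]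
  have hapn2 : ∀ a : GaloisField 2 n, a ≠ 0 →
      (univ.filter fun x => F (x + a) = F x).card ≤ 2 := by
    intro a ha
    have h := hF a ha 0
    have hset : {x : GaloisField 2 n | F (x + a) + F x = 0}
        = {x : GaloisField 2 n | F (x + a) = F x} := by
      ext x; exact hchar _ _
    rw [hset, Set.ncard_eq_toFinset_card'] at h
    simpa using h
  have hge3 : ∀ x : GaloisField 2 n, F x ≠ 0 → 3 ≤ m (F x) := by
    intro x hx
    have := h3 (F x) ⟨x, rfl⟩ hx
    rwa [hncard] at this
  have hfib : ∀ x : GaloisField 2 n,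
      (univ.filter fun a => F (x + a) = F x).card = m (F x) := by
    intro x
    apply Finset.card_bij (fun a _ => x + a)
    · intro a ha
      simp only [mem_filter, mem_univ, true_and] at ha ⊢
      exact ha
    · intro a₁ _ a₂ _ h
      exact add_left_cancel h
    · intro z hz
      simp only [mem_filter, mem_univ, true_and] at hz
      refine ⟨x + z, ?_, ?_⟩
      · simp only [mem_filter, mem_univ, true_and]
        rwa [← add_assoc, CharTwo.add_self_eq_zero, zero_add]
      · rw [← add_assoc, CharTwo.add_self_eq_zero, zero_add]
  have hS : ∑ a : GaloisField 2 n, (univ.filter fun x => F (x + a) = F x).card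
      = ∑ x : GaloisField 2 n, m (F x) := by
    simp_rw [Finset.card_filter]
    rw [Finset.sum_comm]
    refine Finset.sum_congr rfl fun x _ => ?_
    rw [← Finset.card_filter]
    exact hfib x
  have hupper : ∑ x : GaloisField 2 n, m (F x) ≤ q + 2 * (q - 1) := by
    rw [← hS, ← Finset.add_sum_erase _ _ (mem_univ (0 : GaloisField 2 n))]
    have h0 : (univ.filter fun x => F (x + 0) = F x).card = q := by
      simp
      exact Fintype.card_congr' rfl
    rw [h0]
    gcongr
    calc ∑ a ∈ univ.erase (0 : GaloisField 2 n), (univ.filter fun x => F (x + a) = F x).card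
        ≤ ∑ _a ∈ univ.erase (0 : GaloisField 2 n), 2 :=
          Finset.sum_le_sum fun a ha => hapn2 a (Finset.ne_of_mem_erase ha)
      _ = (univ.erase (0 : GaloisField 2 n)).card * 2 := by
          rw [Finset.sum_const, smul_eq_mul]
      _ = 2 * (q - 1) := by
          rw [Finset.card_erase_of_mem (mem_univ _), Finset.card_univ, mul_comm]
  set m0 : ℕ := m 0 with hm0def
  set s : Finset (GaloisField 2 n) := univ.filter fun x => ¬ F x = 0 with hs
  set c : ℕ := s.card with hc
  have hcard_split : m0 + c = q := by
    rw [hm0def, hc, hs, hm]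
    exact Finset.card_filter_add_card_filter_not _
  have hsum_split : ∑ x : GaloisField 2 n, m (F x) = m0 * m0 + ∑ x ∈ s, m (F x) := by
    rw [← Finset.sum_filter_add_sum_filter_not univ (fun x => F x = 0) (fun x => m (F x))]
    congr 1
    rw [Finset.sum_congr rfl (fun x hx => by
      rw [(Finset.mem_filter.1 hx).2]), Finset.sum_const, smul_eq_mul]
  have hs_ge : ∀ x ∈ s, 3 ≤ m (F x) := fun x hx => hge3 x (Finset.mem_filter.1 hx).2
  have hlow : 3 * c ≤ ∑ x ∈ s, m (F x) := by
    calc 3 * c = ∑ _x ∈ s, 3 := by rw [Finset.sum_const, smul_eq_mul, mul_comm]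
      _ ≤ ∑ x ∈ s, m (F x) := Finset.sum_le_sum hs_ge
  have hm0pos : 1 ≤ m0 := by
    rw [hm0def, hm]
    refine Finset.card_pos.2 ⟨0, ?_⟩
    simp [hF0]
  have hkey : m0 * m0 + 3 * c ≤ q + 2 * (q - 1) := by
    calc m0 * m0 + 3 * c ≤ m0 * m0 + ∑ x ∈ s, m (F x) := by gcongr
      _ = ∑ x : GaloisField 2 n, m (F x) := hsum_split.symm
      _ ≤ q + 2 * (q - 1) := hupper
  have hq1 : 1 ≤ q := Fintype.card_pos
  have hineq : m0 * m0 + 2 ≤ 3 * m0 := by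
    have h1 : q + 2 * (q - 1) = 3 * (m0 + c) - 2 := by omega
    rw [h1] at hkey
    omega
  have hm0le : m0 ≤ 2 := by
    by_contra h
    have := Nat.mul_le_mul_right m0 (by omega : 3 ≤ m0)
    omega
  have hrev : 3 * m0 ≤ m0 * m0 + 2 := by
    interval_cases m0 <;> norm_num
  have hsum_nz : ∑ x ∈ s, m (F x) ≤ 3 * c := by
    have h1 : m0 * m0 + ∑ x ∈ s, m (F x) ≤ q + 2 * (q - 1) := by
      rw [← hsum_split]; exact hupper
    omega
  have heq3 : ∀ x ∈ s, m (F x) = 3 := by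
    by_contra h
    push_neg at h
    obtain ⟨x, hx, hx3⟩ := h
    have hlt : ∑ _x ∈ s, 3 < ∑ x ∈ s, m (F x) := by
      refine Finset.sum_lt_sum hs_ge ⟨x, hx, ?_⟩
      exact lt_of_le_of_ne (hs_ge x hx) (Ne.symm hx3)
    rw [Finset.sum_const, smul_eq_mul, mul_comm] at hlt
    omega
  have hdvd : 3 ∣ c := by
    rw [hc, Finset.card_eq_sum_card_image F s]
    refine Finset.dvd_sum fun y hy => ?_
    obtain ⟨x, hx, hxy⟩ := Finset.mem_image.1 hy
    have hy0 : y ≠ 0 := hxy ▸ (Finset.mem_filter.1 hx).2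
    have hfe : s.filter (fun a => F a = y) = univ.filter fun a => F a = y := by
      ext z
      simp only [hs, Finset.mem_filter, mem_univ, true_and, Finset.filter_filter]
      constructor
      · rintro ⟨_, h⟩; exact h
      · intro h; exact ⟨h ▸ hy0, h⟩
    rw [hfe]
    have h2 : (univ.filter fun a => F a = y).card = m y := rfl
    rw [h2, ← hxy, heq3 x hx]
  have hpow : ∀ k : ℕ, 2 ^ k % 3 = 1 ∨ 2 ^ k % 3 = 2 := by
    intro k
    induction k with
    | zero => simp
    | succ k ih => rw [pow_succ]; omega
  have hqmod : q % 3 = 1 := by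
    obtain ⟨k, hk⟩ := hne
    rw [hq, hk, pow_add, Nat.mul_mod]
    rcases hpow k with h | h <;> rw [h] <;> norm_num
  have hm01 : m0 = 1 := by omega
  have hfil : univ.filter (fun x => F x = (0 : GaloisField 2 n)) = {0} := by
    have h2 : (univ.filter fun x => F x = (0 : GaloisField 2 n)).card = 1 := by
      have : (univ.filter fun x => F x = (0 : GaloisField 2 n)).card = m0 := rfl
      rw [this, hm01]
    obtain ⟨a, ha⟩ := Finset.card_eq_one.1 h2
    have h0 : (0 : GaloisField 2 n) ∈ univ.filter fun x => F x = (0 : GaloisField 2 n) := by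
      simp [hF0]
    rw [ha] at h0 ⊢
    rw [Finset.mem_singleton] at h0
    rw [h0]
  constructor
  · intro x
    constructor
    · intro hx
      have hmem : x ∈ univ.filter (fun x => F x = (0 : GaloisField 2 n)) := by simp [hx]
      rw [hfil] at hmem
      simpa using hmem
    · intro hx; rw [hx]; exact hF0
  · intro y hy hy0
    obtain ⟨x, hxy⟩ := hy
    have hxs : x ∈ s := by
      simp only [hs, mem_filter, mem_univ, true_and]
      rw [hxy]; exact hy0
    rw [← hxy, hncard]
    exact heq3 x hxs
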